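/- Let Γ = ([1 0; 1 0], (1,1)) ∈ ℝ^{2×2} × ℝ^{1×2}, so R(Γ)(x) = 2·ReLU(x₁). Let g_k(x) = 2·ReLU(⟨(1,0),x⟩) + (1/k)·ReLU(⟨(0,1),x⟩). Then for every k ∈ ℕ and every Φ_k ∈ ℝ^{2×2} × ℝ^{1×2} with realization g_k, it holds that |g_k − R(Γ)|_{W^{1,∞}} = 1/k while ‖Φ_k − Γ‖_∞ ≥ 1. -/

import Mathlib

open MeasureTheory

/-- The Sobolev `W^{1,∞}` seminorm: essential supremum of the max-norm of the
(a.e.) gradient. -/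
noncomputable def sobSemi (d : ℕ) (f : (Fin d → ℝ) → ℝ) : ℝ :=
  essSup (fun x => ⨆ j : Fin d, |fderiv ℝ f x (Pi.single j 1)|) volume

lemma iSup_fin2 (h : Fin 2 → ℝ) : (⨆ j : Fin 2, h j) = max (h 0) (h 1) := by
  apply le_antisymm
  · exact ciSup_le fun j => by fin_cases j <;> simp [le_max_left, le_max_right]
  · exact max_le (le_ciSup (Set.Finite.bddAbove (Set.finite_range h)) 0)
      (le_ciSup (Set.Finite.bddAbove (Set.finite_range h)) 1)

lemma hyperplane_null : (volume {x : Fin 2 → ℝ | x 1 = 0}) = 0 := by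
  have : {x : Fin 2 → ℝ | x 1 = 0}
      = Set.pi Set.univ (fun j => if j = 1 then ({0} : Set ℝ) else Set.univ) := by
    ext x
    simp only [Set.mem_setOf_eq, Set.mem_pi, Set.mem_univ, true_implies]
    constructor
    · intro h j; fin_cases j <;> simp [h]
    · intro h; have := h 1; simpa using this
  rw [this, volume_pi_pi]
  simp [Fin.prod_univ_two]

/-- Failure of inverse stability due to redundant directions: `Γ` has both
first-layer rows equal to `(1,0)` and output weights `(1,1)`, so
`R(Γ)(x) = 2·ReLU(x₁)`; `g_k = 2·ReLU(x₁) + (1/k)·ReLU(x₂)` is Sobolev-close,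
yet every parametrization of `g_k` is at distance at least `1` from `Γ`. -/
theorem stmt_7 (k : ℕ) (hk : 1 ≤ k)
    (A : Fin 2 → Fin 2 → ℝ) (c : Fin 2 → ℝ)
    (hreal : ∀ x : Fin 2 → ℝ,
      ∑ i, c i * max (∑ j, A i j * x j) 0 =
        2 * max (x 0) 0 + (1 / (k : ℝ)) * max (x 1) 0) :
    sobSemi 2 (fun x =>
        (2 * max (x 0) 0 + (1 / (k : ℝ)) * max (x 1) 0) - 2 * max (x 0) 0) = 1 / k ∧
      max (⨆ i : Fin 2, ⨆ j : Fin 2, |A i j - (if j = 0 then 1 else 0)|)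
          (⨆ i : Fin 2, |c i - 1|) ≥ 1 := by
  have hkpos : (0:ℝ) < 1 / k := by
    have : (0:ℝ) < k := by exact_mod_cast hk
    positivity
  constructor
  · -- Sobolev seminorm computation
    set f : (Fin 2 → ℝ) → ℝ := fun x =>
        (2 * max (x 0) 0 + (1 / (k : ℝ)) * max (x 1) 0) - 2 * max (x 0) 0 with hf
    set g : (Fin 2 → ℝ) → ℝ := fun x => ⨆ j : Fin 2, |fderiv ℝ f x (Pi.single j 1)| with hg
    -- on {x1 > 0}, g = 1/k
    have hpos : ∀ x : Fin 2 → ℝ, 0 < x 1 → g x = 1 / k := by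
      intro x hx
      have hU : IsOpen {y : Fin 2 → ℝ | 0 < y 1} := isOpen_lt continuous_const (continuous_apply 1)
      have heq : f =ᶠ[nhds x] fun y => (1 / (k:ℝ)) * y 1 := by
        filter_upwards [hU.mem_nhds hx] with y hy
        simp only [f, max_eq_left (le_of_lt hy)]
        ring
      have hd : HasFDerivAt (fun y : Fin 2 → ℝ => (1 / (k:ℝ)) * y 1)
          ((1 / (k:ℝ)) • (ContinuousLinearMap.proj 1 : (Fin 2 → ℝ) →L[ℝ] ℝ)) x :=
        ((ContinuousLinearMap.proj 1 : (Fin 2 → ℝ) →L[ℝ] ℝ).hasFDerivAt).const_mul _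
      have hfd : fderiv ℝ f x
          = (1 / (k:ℝ)) • (ContinuousLinearMap.proj 1 : (Fin 2 → ℝ) →L[ℝ] ℝ) := by
        rw [heq.fderiv_eq, hd.fderiv]
      have : g x = max |fderiv ℝ f x (Pi.single 0 1)| |fderiv ℝ f x (Pi.single 1 1)| :=
        iSup_fin2 (fun j => |fderiv ℝ f x (Pi.single j 1)|)
      rw [this, hfd]
      have e0 : (Pi.single (0:Fin 2) (1:ℝ) : Fin 2 → ℝ) 1 = 0 :=
        Pi.single_eq_of_ne (by decide : (1:Fin 2) ≠ 0) 1
      have e1 : (Pi.single (1:Fin 2) (1:ℝ) : Fin 2 → ℝ) 1 = 1 := Pi.single_eq_same 1 1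
      simp [ContinuousLinearMap.proj, e0, e1, abs_of_nonneg hkpos.le]
    -- on {x1 < 0}, g = 0
    have hneg : ∀ x : Fin 2 → ℝ, x 1 < 0 → g x = 0 := by
      intro x hx
      have hU : IsOpen {y : Fin 2 → ℝ | y 1 < 0} := isOpen_lt (continuous_apply 1) continuous_const
      have heq : f =ᶠ[nhds x] fun _ => (0:ℝ) := by
        filter_upwards [hU.mem_nhds hx] with y hy
        simp only [f, max_eq_right (le_of_lt hy)]
        ring
      have hfd : fderiv ℝ f x = 0 := by
        rw [heq.fderiv_eq]; exact fderiv_const_apply _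
      have : g x = max |fderiv ℝ f x (Pi.single 0 1)| |fderiv ℝ f x (Pi.single 1 1)| :=
        iSup_fin2 (fun j => |fderiv ℝ f x (Pi.single j 1)|)
      rw [this, hfd]
      simp
    have hnull : (volume {x : Fin 2 → ℝ | x 1 = 0}) = 0 := hyperplane_null
    rw [show sobSemi 2 f = essSup g volume from rfl, essSup_eq_sInf]
    apply le_antisymm
    · -- sInf ≤ 1/k : 1/k is in the set
      apply csInf_le
      · -- bddBelow by 0
        refine ⟨0, fun a ha => ?_⟩
        by_contra hlt
        push_neg at hlt
        have : {x : Fin 2 → ℝ | a < g x} ⊇ {x | x 1 < 0} := by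
          intro x hx
          simp only [Set.mem_setOf_eq]
          rw [hneg x hx]
          exact hlt
        have hpos' : (0:ENNReal) < volume {x : Fin 2 → ℝ | x 1 < 0} := by
          have hU : IsOpen {y : Fin 2 → ℝ | y 1 < 0} :=
            isOpen_lt (continuous_apply 1) continuous_const
          exact hU.measure_pos volume ⟨fun _ => -1, by norm_num⟩
        have := measure_mono (μ := (volume : Measure (Fin 2 → ℝ))) this
        rw [Set.mem_setOf_eq] at ha
        rw [ha] at this
        exact absurd (le_antisymm (le_of_le_of_eq this rfl) zero_le) (ne_of_gt hpos')
      · -- 1/k is in the set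
        have hsub : {x : Fin 2 → ℝ | 1 / (k:ℝ) < g x} ⊆ {x : Fin 2 → ℝ | x 1 = 0} := by
          intro x hx
          simp only [Set.mem_setOf_eq] at hx ⊢
          by_contra hne
          rcases lt_or_gt_of_ne hne with h | h
          · rw [hneg x h] at hx; exact absurd hx (not_lt.mpr hkpos.le)
          · rw [hpos x h] at hx; exact absurd hx (lt_irrefl _)
        exact le_antisymm (le_trans (measure_mono hsub) hnull.le) zero_le
    · -- 1/k ≤ sInf : every element a of the set satisfies 1/k ≤ a
      apply le_csInf
      · refine ⟨1 / (k:ℝ), ?_⟩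
        have hsub : {x : Fin 2 → ℝ | 1 / (k:ℝ) < g x} ⊆ {x : Fin 2 → ℝ | x 1 = 0} := by
          intro x hx
          simp only [Set.mem_setOf_eq] at hx ⊢
          by_contra hne
          rcases lt_or_gt_of_ne hne with h | h
          · rw [hneg x h] at hx; exact absurd hx (not_lt.mpr hkpos.le)
          · rw [hpos x h] at hx; exact absurd hx (lt_irrefl _)
        exact le_antisymm (le_trans (measure_mono hsub) hnull.le) zero_le
      · intro a ha
        by_contra hlt
        push_neg at hlt
        have hsub : {x : Fin 2 → ℝ | 0 < x 1} ⊆ {x : Fin 2 → ℝ | a < g x} := by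
          intro x hx
          simp only [Set.mem_setOf_eq] at hx ⊢
          rw [hpos x hx]
          exact hlt
        have hpos' : (0:ENNReal) < volume {x : Fin 2 → ℝ | 0 < x 1} := by
          have hU : IsOpen {y : Fin 2 → ℝ | 0 < y 1} :=
            isOpen_lt continuous_const (continuous_apply 1)
          exact hU.measure_pos volume ⟨fun _ => 1, by norm_num⟩
        rw [Set.mem_setOf_eq] at ha
        have := measure_mono (μ := (volume : Measure (Fin 2 → ℝ))) hsub
        rw [ha] at this
        exact absurd (le_antisymm this zero_le) (ne_of_gt hpos')
  · -- distance lower bound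
    -- claim: some row has A i 0 ≤ 0
    have hrow : A 0 0 ≤ 0 ∨ A 1 0 ≤ 0 := by
      by_contra hcon
      push_neg at hcon
      obtain ⟨h0, h1⟩ := hcon
      set t : ℝ := max ((|A 0 1| + 1) / A 0 0) ((|A 1 1| + 1) / A 1 0) with ht
      have harg : ∀ i : Fin 2, ∀ s : ℝ, |s| ≤ 1 → 0 < A i 0 * t + A i 1 * s := by
        intro i s hs
        have hAi : 0 < A i 0 := by fin_cases i <;> assumption
        have hti : (|A i 1| + 1) / A i 0 ≤ t := by
          fin_cases i
          · exact le_max_left _ _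
          · exact le_max_right _ _
        have h1 : |A i 1| + 1 ≤ A i 0 * t := by
          rw [div_le_iff₀ hAi] at hti; linarith [hti]
        have h2 : A i 1 * s ≥ -(|A i 1|) := by
          have : |A i 1 * s| ≤ |A i 1| := by
            rw [abs_mul]
            calc |A i 1| * |s| ≤ |A i 1| * 1 := by
                  exact mul_le_mul_of_nonneg_left hs (abs_nonneg _)
              _ = |A i 1| := mul_one _
          linarith [neg_abs_le (A i 1), abs_le.mp this]
        linarith
      have htpos : 0 < t := by
        have := harg 0 0 (by norm_num)
        nlinarith [harg 0 0 (by norm_num : |(0:ℝ)| ≤ 1)]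
      -- evaluate hreal at (t, 1), (t, -1), (t, 0)
      have hev : ∀ s : ℝ, |s| ≤ 1 →
          c 0 * (A 0 0 * t + A 0 1 * s) + c 1 * (A 1 0 * t + A 1 1 * s)
            = 2 * t + (1 / (k:ℝ)) * max s 0 := by
        intro s hs
        have := hreal (fun j => if j = 0 then t else s)
        simp only [Fin.sum_univ_two] at this
        norm_num at this
        rw [max_eq_left (harg 0 s hs).le, max_eq_left (harg 1 s hs).le,
          max_eq_left htpos.le] at this
        rw [one_div]
        linarith [this]
      have e1 := hev 1 (by norm_num)
      have e2 := hev (-1) (by norm_num)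
      have e3 := hev 0 (by norm_num)
      rw [show max (1:ℝ) 0 = 1 by norm_num] at e1
      rw [show max (-1:ℝ) 0 = 0 by norm_num] at e2
      rw [show max (0:ℝ) 0 = 0 by norm_num] at e3
      have : (1:ℝ) / k = 0 := by linarith
      linarith
    obtain ⟨i0, hi0⟩ : ∃ i : Fin 2, A i 0 ≤ 0 := by
      rcases hrow with h | h
      · exact ⟨0, h⟩
      · exact ⟨1, h⟩
    have h1 : (1:ℝ) ≤ |A i0 0 - (if (0:Fin 2) = 0 then (1:ℝ) else 0)| := by
      rw [if_pos rfl, abs_of_nonpos (by linarith)]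
      linarith
    have h2 : |A i0 0 - (if (0:Fin 2) = 0 then (1:ℝ) else 0)|
        ≤ ⨆ j : Fin 2, |A i0 j - (if j = 0 then 1 else 0)| :=
      le_ciSup (f := fun j : Fin 2 => |A i0 j - (if j = 0 then 1 else 0)|)
        (Set.Finite.bddAbove (Set.finite_range _)) (0 : Fin 2)
    have h3 : (⨆ j : Fin 2, |A i0 j - (if j = 0 then 1 else 0)|)
        ≤ ⨆ i : Fin 2, ⨆ j : Fin 2, |A i j - (if j = 0 then 1 else 0)| :=
      le_ciSup (f := fun i : Fin 2 => ⨆ j : Fin 2, |A i j - (if j = 0 then 1 else 0)|)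
        (Set.Finite.bddAbove (Set.finite_range _)) i0
    calc (1:ℝ) ≤ _ := le_trans h1 (le_trans h2 h3)
      _ ≤ _ := le_max_left _ _
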